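/- Let k ≥ 2 and F ⊆ 2^[n] a family such that every maximal chain C of 2^[n] satisfies |F ∩ C| ≤ k, and moreover the number of maximal chains with |F ∩ C| ≤ k − 2 is at least the number of maximal chains with |F ∩ C| = k. Then ∑_{F ∈ F} 1/C(n, |F|) ≤ k − 1, where C(n, m) denotes the binomial coefficient. -/

import Mathlib

def maxChains (n : ℕ) : Finset (Finset (Finset (Fin n))) :=
  Finset.univ.powerset.filter (fun C => C.card = n + 1 ∧ ∀ A ∈ C, ∀ B ∈ C, A ⊆ B ∨ B ⊆ A)

open Finset

namespace Stmt11Aux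

lemma card_filter_val_lt (n i : ℕ) (hi : i ≤ n) :
    (Finset.univ.filter (fun x : Fin n => (x : ℕ) < i)).card = i := by
  have himg : (Finset.univ.filter (fun x : Fin n => (x : ℕ) < i)).image Fin.val
      = Finset.range i := by
    ext j
    simp only [mem_image, mem_filter, mem_univ, true_and, mem_range]
    constructor
    · rintro ⟨x, hx, rfl⟩; exact hx
    · intro hj; exact ⟨⟨j, lt_of_lt_of_le hj hi⟩, hj, rfl⟩
  have h2 := Finset.card_image_of_injective
    (Finset.univ.filter (fun x : Fin n => (x : ℕ) < i)) Fin.val_injective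
  rw [himg, Finset.card_range] at h2
  exact h2.symm

/-- The maximal chain associated to a permutation. -/
def chainOf (n : ℕ) (σ : Equiv.Perm (Fin n)) : Finset (Finset (Fin n)) :=
  (Finset.range (n + 1)).image (fun i => Finset.univ.filter (fun x => ((σ x : ℕ) < i)))

lemma card_chainElt (n : ℕ) (σ : Equiv.Perm (Fin n)) (i : ℕ) (hi : i ≤ n) :
    (Finset.univ.filter (fun x => ((σ x : ℕ) < i))).card = i := by
  have : (Finset.univ.filter (fun x => ((σ x : ℕ) < i)))
      = (Finset.univ.filter (fun y : Fin n => (y : ℕ) < i)).image σ.symm := by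
    ext x
    simp only [mem_filter, mem_univ, true_and, mem_image]
    constructor
    · intro h; exact ⟨σ x, h, σ.symm_apply_apply x⟩
    · rintro ⟨y, hy, rfl⟩; simpa using hy
  rw [this, Finset.card_image_of_injective _ σ.symm.injective,
    card_filter_val_lt n i hi]

lemma chainOf_mem (n : ℕ) (σ : Equiv.Perm (Fin n)) : chainOf n σ ∈ maxChains n := by
  rw [maxChains, mem_filter]
  refine ⟨by simp, ?_, ?_⟩
  · rw [chainOf, Finset.card_image_of_injOn, Finset.card_range]
    intro i hi j hj hij
    simp only [Finset.coe_range, Set.mem_Iio, Nat.lt_succ_iff] at hi hj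
    simp only at hij
    have := card_chainElt n σ i hi
    rw [hij, card_chainElt n σ j hj] at this
    exact this.symm
  · intro A hA B hB
    rw [chainOf, mem_image] at hA hB
    obtain ⟨i, hi, rfl⟩ := hA
    obtain ⟨j, hj, rfl⟩ := hB
    rcases le_total i j with h | h
    · left; intro x hx; rw [mem_filter] at hx ⊢; exact ⟨hx.1, lt_of_lt_of_le hx.2 h⟩
    · right; intro x hx; rw [mem_filter] at hx ⊢; exact ⟨hx.1, lt_of_lt_of_le hx.2 h⟩

lemma chainOf_injective (n : ℕ) : Function.Injective (chainOf n) := by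
  intro σ τ h
  have key : ∀ i : ℕ, i ≤ n → (Finset.univ.filter (fun x => ((σ x : ℕ) < i)))
      = (Finset.univ.filter (fun x => ((τ x : ℕ) < i))) := by
    intro i hi
    have hmem : (Finset.univ.filter (fun x => ((σ x : ℕ) < i))) ∈ chainOf n τ := by
      rw [← h, chainOf, mem_image]
      exact ⟨i, by simpa [Nat.lt_succ_iff] using hi, rfl⟩
    rw [chainOf, mem_image] at hmem
    obtain ⟨j, hj, hji⟩ := hmem
    rw [mem_range, Nat.lt_succ_iff] at hj
    have hcard := card_chainElt n σ i hi
    rw [← hji, card_chainElt n τ j hj] at hcard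
    rw [← hji, hcard]
  have hxy : ∀ x : Fin n, ∀ i : ℕ, i ≤ n → ((σ x : ℕ) < i ↔ (τ x : ℕ) < i) := by
    intro x i hi
    have := key i hi
    constructor
    · intro hx
      have : x ∈ Finset.univ.filter (fun x => ((τ x : ℕ) < i)) := by
        rw [← key i hi, mem_filter]; exact ⟨mem_univ x, hx⟩
      exact (mem_filter.mp this).2
    · intro hx
      have : x ∈ Finset.univ.filter (fun x => ((σ x : ℕ) < i)) := by
        rw [key i hi, mem_filter]; exact ⟨mem_univ x, hx⟩
      exact (mem_filter.mp this).2
  ext x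
  have h1 : (σ x : ℕ) ≤ (τ x : ℕ) :=
    Nat.lt_succ_iff.mp ((hxy x ((τ x : ℕ) + 1) (τ x).isLt).mpr (Nat.lt_succ_self _))
  have h2 : (τ x : ℕ) ≤ (σ x : ℕ) :=
    Nat.lt_succ_iff.mp ((hxy x ((σ x : ℕ) + 1) (σ x).isLt).mp (Nat.lt_succ_self _))
  exact le_antisymm h1 h2

lemma chainOf_surjective (n : ℕ) (C : Finset (Finset (Fin n))) (hC : C ∈ maxChains n) :
    ∃ σ : Equiv.Perm (Fin n), chainOf n σ = C := by
  rw [maxChains, mem_filter] at hC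
  obtain ⟨-, hcard, hchain⟩ := hC
  have hinj : ∀ A ∈ C, ∀ B ∈ C, A.card = B.card → A = B := by
    intro A hA B hB hAB
    rcases hchain A hA B hB with h | h
    · exact Finset.eq_of_subset_of_card_le h (le_of_eq hAB.symm)
    · exact (Finset.eq_of_subset_of_card_le h (le_of_eq hAB)).symm
  have himgcard : (C.image Finset.card).card = n + 1 := by
    rw [Finset.card_image_of_injOn (fun A hA B hB h => hinj A hA B hB h), hcard]
  have himg : C.image Finset.card = Finset.range (n + 1) := by
    apply Finset.eq_of_subset_of_card_le
    · intro i hi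
      rw [mem_image] at hi
      obtain ⟨A, hA, rfl⟩ := hi
      rw [mem_range, Nat.lt_succ_iff]
      simpa using Finset.card_le_univ A
    · rw [Finset.card_range, himgcard]
  have hex : ∀ i : Fin (n + 1), ∃ B ∈ C, B.card = (i : ℕ) := by
    intro i
    have : (i : ℕ) ∈ C.image Finset.card := by rw [himg]; simp [i.isLt]
    simpa [mem_image] using this
  choose A hAmem hAcard using hex
  have hAinj : Function.Injective A := by
    intro i j h
    apply Fin.ext
    rw [← hAcard i, ← hAcard j, h]
  have hmono : ∀ i j : Fin (n + 1), i ≤ j → A i ⊆ A j := by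
    intro i j hij
    rcases hchain _ (hAmem i) _ (hAmem j) with h | h
    · exact h
    · have hji : (j : ℕ) ≤ (i : ℕ) := by
        rw [← hAcard i, ← hAcard j]; exact Finset.card_le_card h
      have : i = j := Fin.ext (le_antisymm hij hji)
      rw [this]
  have hCimg : C = Finset.univ.image A := by
    symm
    apply Finset.eq_of_subset_of_card_le
    · intro S hS
      rw [mem_image] at hS
      obtain ⟨i, -, rfl⟩ := hS
      exact hAmem i
    · rw [Finset.card_image_of_injective _ hAinj, hcard]
      simp
  have hA0 : A 0 = ∅ := Finset.card_eq_zero.mp (by simpa using hAcard 0)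
  have hAlast : A (Fin.last n) = Finset.univ :=
    Finset.eq_univ_of_card _ (by rw [hAcard]; simp)
  -- the entry stage of each point
  set S : Fin n → Finset (Fin (n + 1)) :=
    fun x => Finset.univ.filter (fun j => x ∈ A j) with hS
  have hSne : ∀ x, (S x).Nonempty := by
    intro x
    exact ⟨Fin.last n, by simp [hS, hAlast]⟩
  set m : Fin n → Fin (n + 1) := fun x => (S x).min' (hSne x) with hm
  have hmem_iff : ∀ x : Fin n, ∀ j : Fin (n + 1), x ∈ A j ↔ m x ≤ j := by
    intro x j
    constructor
    · intro h
      exact Finset.min'_le _ _ (by simp [hS, h])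
    · intro h
      have : x ∈ A (m x) := by
        have := Finset.min'_mem (S x) (hSne x)
        simpa [hS] using this
      exact hmono _ _ h this
  have hmpos : ∀ x, 1 ≤ (m x : ℕ) := by
    intro x
    by_contra hc
    push_neg at hc
    have h0 : m x = 0 := Fin.ext (by simp only [Fin.val_zero]; omega)
    have : x ∈ A 0 := (hmem_iff x 0).mpr (le_of_eq h0)
    rw [hA0] at this
    exact absurd this (Finset.notMem_empty x)
  have hmle : ∀ x, (m x : ℕ) ≤ n := fun x => Nat.lt_succ_iff.mp (m x).isLt
  -- the permutation
  set g : Fin n → Fin n := fun x => ⟨(m x : ℕ) - 1, by have := hmpos x; have := hmle x; omega⟩ with hg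
  have hgval : ∀ x, (g x : ℕ) = (m x : ℕ) - 1 := fun x => rfl
  have hginj : Function.Injective g := by
    intro x y hxy
    have hmeq : m x = m y := by
      apply Fin.ext
      have h1 := hmpos x; have h2 := hmpos y
      have h3 := hmle x; have h4 := hmle y
      have := congrArg Fin.val hxy
      rw [hgval, hgval] at this
      omega
    have h1 : 1 ≤ (m x : ℕ) := hmpos x
    set j₀ : Fin (n + 1) := m x with hj₀
    set j₁ : Fin (n + 1) := ⟨(j₀ : ℕ) - 1, by omega⟩ with hj₁
    have hj₁le : j₁ ≤ j₀ := by simp only [Fin.le_def, hj₁]; omega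
    have hsub : A j₁ ⊆ A j₀ := hmono _ _ hj₁le
    have hsdiff : (A j₀ \ A j₁).card = 1 := by
      rw [Finset.card_sdiff_of_subset hsub, hAcard, hAcard]
      simp only [hj₁]
      omega
    obtain ⟨a, ha⟩ := Finset.card_eq_one.mp hsdiff
    have hx : x ∈ A j₀ \ A j₁ := by
      rw [Finset.mem_sdiff]
      refine ⟨(hmem_iff x j₀).mpr le_rfl, ?_⟩
      intro hxj
      have := (hmem_iff x j₁).mp hxj
      rw [Fin.le_def] at this
      simp only [hj₁] at this
      omega
    have hy : y ∈ A j₀ \ A j₁ := by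
      rw [Finset.mem_sdiff]
      refine ⟨(hmem_iff y j₀).mpr (le_of_eq hmeq.symm), ?_⟩
      intro hyj
      have := (hmem_iff y j₁).mp hyj
      rw [Fin.le_def, ← hmeq] at this
      simp only [hj₁] at this
      omega
    rw [ha, Finset.mem_singleton] at hx hy
    rw [hx, hy]
  have hgbij : Function.Bijective g := (Finite.injective_iff_bijective).mp hginj
  refine ⟨Equiv.ofBijective g hgbij, ?_⟩
  have hpt : ∀ j : Fin (n + 1),
      Finset.univ.filter (fun x => ((Equiv.ofBijective g hgbij x : ℕ) < (j : ℕ))) = A j := by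
    intro j
    ext x
    simp only [mem_filter, mem_univ, true_and, Equiv.ofBijective_apply]
    rw [hmem_iff x j, Fin.le_def]
    have h1 := hmpos x; have h2 := hmle x; have h3 := hgval x
    omega
  rw [chainOf, hCimg]
  ext T
  simp only [mem_image, mem_range, mem_univ, true_and, Nat.lt_succ_iff]
  constructor
  · rintro ⟨i, hi, rfl⟩
    exact ⟨⟨i, Nat.lt_succ_of_le hi⟩, (hpt ⟨i, Nat.lt_succ_of_le hi⟩).symm⟩
  · rintro ⟨j, rfl⟩
    exact ⟨(j : ℕ), Nat.lt_succ_iff.mp j.isLt, hpt j⟩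

lemma mem_chainOf_iff (n : ℕ) (σ : Equiv.Perm (Fin n)) (A : Finset (Fin n)) :
    A ∈ chainOf n σ ↔ ∀ x, x ∈ A ↔ ((σ x : ℕ) < A.card) := by
  constructor
  · intro h
    rw [chainOf, mem_image] at h
    obtain ⟨i, hi, rfl⟩ := h
    rw [mem_range, Nat.lt_succ_iff] at hi
    rw [card_chainElt n σ i hi]
    intro x; simp
  · intro h
    rw [chainOf, mem_image]
    refine ⟨A.card, ?_, ?_⟩
    · rw [mem_range, Nat.lt_succ_iff]; simpa using Finset.card_le_univ A
    · ext x
      simp only [mem_filter, mem_univ, true_and]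
      exact (h x).symm

/-- The equivalence between permutations whose chain passes through `A` and pairs of
bijections. -/
def permEquiv (n : ℕ) (A : Finset (Fin n)) :
    {σ : Equiv.Perm (Fin n) // ∀ x, x ∈ A ↔ ((σ x : ℕ) < A.card)} ≃
      (({x : Fin n // x ∈ A}) ≃ {y : Fin n // (y : ℕ) < A.card}) ×
        (({x : Fin n // ¬ x ∈ A}) ≃ {y : Fin n // ¬ (y : ℕ) < A.card}) where
  toFun σ := (Equiv.subtypeEquiv σ.1 (fun x => σ.2 x),
    Equiv.subtypeEquiv σ.1 (fun x => not_congr (σ.2 x)))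
  invFun p := ⟨(Equiv.sumCompl (fun x : Fin n => x ∈ A)).symm.trans
      ((Equiv.sumCongr p.1 p.2).trans (Equiv.sumCompl (fun y : Fin n => (y : ℕ) < A.card))), by
    intro x
    by_cases hx : x ∈ A
    · simp only [Equiv.trans_apply, Equiv.sumCompl_symm_apply_of_pos hx,
        Equiv.sumCongr_apply, Sum.map_inl, Equiv.sumCompl_apply_inl]
      exact ⟨fun _ => (p.1 ⟨x, hx⟩).2, fun _ => hx⟩
    · simp only [Equiv.trans_apply, Equiv.sumCompl_symm_apply_of_neg hx,
        Equiv.sumCongr_apply, Sum.map_inr, Equiv.sumCompl_apply_inr]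
      exact ⟨fun h => absurd h hx, fun h => absurd h (p.2 ⟨x, hx⟩).2⟩⟩
  left_inv σ := by
    apply Subtype.ext
    apply Equiv.ext
    intro x
    by_cases hx : x ∈ A
    · simp [Equiv.sumCompl_symm_apply_of_pos hx]
    · simp [Equiv.sumCompl_symm_apply_of_neg hx]
  right_inv p := by
    apply Prod.ext
    · apply Equiv.ext
      intro x
      apply Subtype.ext
      obtain ⟨x, hx⟩ := x
      simp [Equiv.sumCompl_symm_apply_of_pos hx]
    · apply Equiv.ext
      intro x
      apply Subtype.ext
      obtain ⟨x, hx⟩ := x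
      simp [Equiv.sumCompl_symm_apply_of_neg hx]

lemma count_through (n : ℕ) (A : Finset (Fin n)) :
    ((maxChains n).filter (fun C => A ∈ C)).card = Nat.factorial A.card * Nat.factorial (n - A.card) := by
  have hAn : A.card ≤ n := by simpa using Finset.card_le_univ A
  have himg : (maxChains n).filter (fun C => A ∈ C)
      = (Finset.univ.filter (fun σ : Equiv.Perm (Fin n) => A ∈ chainOf n σ)).image
        (chainOf n) := by
    ext C
    simp only [mem_filter, mem_image, mem_univ, true_and]
    constructor
    · rintro ⟨hC, hA⟩
      obtain ⟨σ, rfl⟩ := chainOf_surjective n C hC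
      exact ⟨σ, hA, rfl⟩
    · rintro ⟨σ, hA, rfl⟩
      exact ⟨chainOf_mem n σ, hA⟩
  rw [himg, Finset.card_image_of_injective _ (chainOf_injective n),
    ← Fintype.card_subtype]
  have e1 : {σ : Equiv.Perm (Fin n) // A ∈ chainOf n σ} ≃
      {σ : Equiv.Perm (Fin n) // ∀ x, x ∈ A ↔ ((σ x : ℕ) < A.card)} :=
    Equiv.subtypeEquivRight (fun σ => mem_chainOf_iff n σ A)
  rw [Fintype.card_congr (e1.trans (permEquiv n A))]
  rw [Fintype.card_prod]
  have hc1 : Fintype.card {x : Fin n // x ∈ A} = A.card := Fintype.card_coe A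
  have hc2 : Fintype.card {y : Fin n // (y : ℕ) < A.card} = A.card := by
    rw [Fintype.card_subtype, card_filter_val_lt n _ hAn]
  have hc3 : Fintype.card {x : Fin n // ¬ x ∈ A} = n - A.card := by
    rw [Fintype.card_subtype_compl, hc1, Fintype.card_fin]
  have hc4 : Fintype.card {y : Fin n // ¬ (y : ℕ) < A.card} = n - A.card := by
    rw [Fintype.card_subtype_compl, hc2, Fintype.card_fin]
  rw [Fintype.card_equiv (Fintype.equivOfCardEq (hc1.trans hc2.symm)),
    Fintype.card_equiv (Fintype.equivOfCardEq (hc3.trans hc4.symm)), hc1, hc3]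

lemma empty_mem_of_mem_maxChains (n : ℕ) (C : Finset (Finset (Fin n)))
    (hC : C ∈ maxChains n) : ∅ ∈ C := by
  obtain ⟨σ, rfl⟩ := chainOf_surjective n C hC
  rw [chainOf, mem_image]
  exact ⟨0, by simp, by simp⟩

lemma card_maxChains (n : ℕ) : (maxChains n).card = Nat.factorial n := by
  have : (maxChains n).filter (fun C => (∅ : Finset (Fin n)) ∈ C) = maxChains n :=
    Finset.filter_true_of_mem (fun C hC => empty_mem_of_mem_maxChains n C hC)
  rw [← this, count_through n ∅]
  simp

end Stmt11Aux

theorem stmt11 (n k : ℕ) (hk : 2 ≤ k) (F : Finset (Finset (Fin n)))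
    (h1 : ∀ C ∈ maxChains n, (F ∩ C).card ≤ k)
    (h2 : ((maxChains n).filter (fun C => (F ∩ C).card = k)).card ≤
      ((maxChains n).filter (fun C => (F ∩ C).card ≤ k - 2)).card) :
    ∑ A ∈ F, (1 : ℚ) / (n.choose A.card) ≤ (k : ℚ) - 1 := by
  classical
  obtain ⟨j, rfl⟩ : ∃ j, k = j + 2 := ⟨k - 2, by omega⟩
  simp only [Nat.add_sub_cancel] at h2
  set M := maxChains n with hM
  set f : Finset (Finset (Fin n)) → ℕ := fun C => (F ∩ C).card with hf
  set p : Finset (Finset (Fin n)) → Prop := fun C => f C = j + 2 with hp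
  set q : Finset (Finset (Fin n)) → Prop := fun C => f C ≤ j with hq
  set R := M.filter (fun C => ¬ p C) with hR
  -- the natural number inequality
  have hsplit1 : ∑ C ∈ M.filter p, f C + ∑ C ∈ M.filter (fun C => ¬ p C), f C
      = ∑ C ∈ M, f C := Finset.sum_filter_add_sum_filter_not M p f
  have hsplit2 : ∑ C ∈ R.filter q, f C + ∑ C ∈ R.filter (fun C => ¬ q C), f C
      = ∑ C ∈ R, f C := Finset.sum_filter_add_sum_filter_not R q f
  have hcsplit1 : (M.filter p).card + R.card = M.card :=
    Finset.card_filter_add_card_filter_not p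
  have hcsplit2 : (R.filter q).card + (R.filter (fun C => ¬ q C)).card = R.card :=
    Finset.card_filter_add_card_filter_not q
  have hSk_sum : ∑ C ∈ M.filter p, f C = (j + 2) * (M.filter p).card := by
    rw [Finset.sum_congr rfl (fun C hC => (Finset.mem_filter.mp hC).2),
      Finset.sum_const, smul_eq_mul, mul_comm]
  have hS2_sum : ∑ C ∈ R.filter q, f C ≤ j * (R.filter q).card := by
    have := Finset.sum_le_card_nsmul (R.filter q) f j
      (fun C hC => (Finset.mem_filter.mp hC).2)
    rwa [smul_eq_mul, mul_comm] at this
  have hmid_sum : ∑ C ∈ R.filter (fun C => ¬ q C), f C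
      ≤ (j + 1) * (R.filter (fun C => ¬ q C)).card := by
    have hb : ∀ C ∈ R.filter (fun C => ¬ q C), f C ≤ j + 1 := by
      intro C hC
      have hCR := (Finset.mem_filter.mp hC).1
      have hCM := (Finset.mem_filter.mp hCR).1
      have hne : ¬ p C := (Finset.mem_filter.mp hCR).2
      have hle := h1 C hCM
      simp only [hp, hf] at hne hle ⊢
      omega
    have := Finset.sum_le_card_nsmul _ f (j + 1) hb
    rwa [smul_eq_mul, mul_comm] at this
  have hfilter_eq : R.filter q = M.filter (fun C => f C ≤ j) := by
    rw [hR, Finset.filter_filter]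
    apply Finset.filter_congr
    intro C _
    simp only [hp, hq]
    constructor
    · rintro ⟨-, h⟩; exact h
    · intro h; exact ⟨by omega, h⟩
  have hks : (M.filter p).card ≤ (R.filter q).card := by
    rw [hfilter_eq]; exact h2
  have hnat : ∑ C ∈ M, f C ≤ (j + 1) * M.card := by
    set a := (M.filter p).card
    set b := (R.filter q).card
    set c := (R.filter (fun C => ¬ q C)).card
    calc ∑ C ∈ M, f C
        = ∑ C ∈ M.filter p, f C + (∑ C ∈ R.filter q, f C
            + ∑ C ∈ R.filter (fun C => ¬ q C), f C) := by rw [hsplit2, hsplit1]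
      _ ≤ (j + 2) * a + (j * b + (j + 1) * c) := by
          rw [hSk_sum]; exact Nat.add_le_add_left (Nat.add_le_add hS2_sum hmid_sum) _
      _ = (j + 1) * a + j * b + (j + 1) * c + a := by ring
      _ ≤ (j + 1) * a + j * b + (j + 1) * c + b := Nat.add_le_add_left hks _
      _ = (j + 1) * (a + (b + c)) := by ring
      _ = (j + 1) * M.card := by rw [hcsplit2, hcsplit1]
  -- double counting
  have hdouble : ∑ C ∈ M, f C
      = ∑ A ∈ F, Nat.factorial A.card * Nat.factorial (n - A.card) := by
    have hcardinter : ∀ C, f C = ∑ A ∈ F, if A ∈ C then 1 else 0 := by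
      intro C
      rw [hf]
      simp only
      rw [← Finset.filter_mem_eq_inter, Finset.card_filter]
    calc ∑ C ∈ M, f C = ∑ C ∈ M, ∑ A ∈ F, if A ∈ C then 1 else 0 :=
          Finset.sum_congr rfl (fun C _ => hcardinter C)
      _ = ∑ A ∈ F, ∑ C ∈ M, if A ∈ C then 1 else 0 := Finset.sum_comm
      _ = ∑ A ∈ F, Nat.factorial A.card * Nat.factorial (n - A.card) := by
          refine Finset.sum_congr rfl (fun A _ => ?_)
          rw [← Finset.card_filter, hM, Stmt11Aux.count_through n A]
  -- pass to ℚ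
  have hnfac : (0 : ℚ) < (Nat.factorial n : ℚ) := by
    exact_mod_cast Nat.factorial_pos n
  have hkey : (Nat.factorial n : ℚ) * ∑ A ∈ F, (1 : ℚ) / (n.choose A.card)
      = ((∑ C ∈ M, f C : ℕ) : ℚ) := by
    rw [hdouble, Finset.mul_sum]
    push_cast
    refine Finset.sum_congr rfl (fun A _ => ?_)
    have hle : A.card ≤ n := by simpa using Finset.card_le_univ A
    have hch : n.choose A.card * (Nat.factorial A.card * Nat.factorial (n - A.card))
        = Nat.factorial n := by rw [← mul_assoc]; exact Nat.choose_mul_factorial_mul_factorial hle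
    have hpos : (0 : ℚ) < (n.choose A.card : ℚ) := by
      exact_mod_cast Nat.choose_pos hle
    rw [mul_one_div, div_eq_iff hpos.ne']
    exact_mod_cast (by rw [mul_comm] at hch; exact hch.symm)
  have hfinal : (Nat.factorial n : ℚ) * ∑ A ∈ F, (1 : ℚ) / (n.choose A.card)
      ≤ ((j : ℚ) + 1) * (Nat.factorial n : ℚ) := by
    rw [hkey]
    have : (j + 1) * M.card = (j + 1) * Nat.factorial n := by
      rw [hM, Stmt11Aux.card_maxChains n]
    calc ((∑ C ∈ M, f C : ℕ) : ℚ) ≤ (((j + 1) * M.card : ℕ) : ℚ) := by exact_mod_cast hnat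
      _ = ((j : ℚ) + 1) * (Nat.factorial n : ℚ) := by rw [this]; push_cast; ring
  have : ∑ A ∈ F, (1 : ℚ) / (n.choose A.card) ≤ (j : ℚ) + 1 := by
    have hmul := (mul_le_mul_iff_right₀ hnfac).mp (by
      calc (Nat.factorial n : ℚ) * ∑ A ∈ F, (1 : ℚ) / (n.choose A.card)
          ≤ ((j : ℚ) + 1) * (Nat.factorial n : ℚ) := hfinal
        _ = (Nat.factorial n : ℚ) * ((j : ℚ) + 1) := by ring)
    exact hmul
  push_cast
  linarith
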